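/- Let p ≥ 5 be an odd prime. Every orbit of size at least 2 of the permutation (c,d) ↦ (x·c, y·d) of ZMod p × ZMod p contains at least one element of 𝓘⁽²⁾ and at least one element of 𝓘⁽¹⁾. -/

import Mathlib

/-- The map `π_{(a,b)}` on `ZMod p × ZMod p` (with `x` a fixed primitive root mod `p`). -/
def piab {p : ℕ} (x a b : ZMod p) : ZMod p × ZMod p → ZMod p × ZMod p :=
  fun cd =>
    if cd.1 = 0 then
      if a + b + cd.2 ≠ 0 then (a, a + b + cd.2) else (a + x * b, 0)
    else
      if b + cd.2 = 0 then (a + cd.1 + x * b, 0) else (a + cd.1, b + cd.2)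

/-- The composite `π⁻¹ ∘ π_{(a,b)}`, where `π(c,d) = (x⁻¹·c, x·d)`,
so `π⁻¹(c,d) = (x·c, x⁻¹·d)`. -/
def piInvPiab {p : ℕ} (x a b : ZMod p) : ZMod p × ZMod p → ZMod p × ZMod p :=
  fun cd => (x * (piab x a b cd).1, x⁻¹ * (piab x a b cd).2)

/-- The orbit of `u` under `f`: the set `{fᵏ(u) : k ∈ ℕ}`. -/
def orbit {α : Type*} (f : α → α) (u : α) : Set α :=
  {v | ∃ k : ℕ, f^[k] u = v}

/-- The set `𝓘⁽²⁾ = {(0,1), (1,0)} ∪ {(z,z) : z ≠ 0} ∪ {(z, z·x) : z ≠ 0}`. -/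
def I2 (p : ℕ) (x : ZMod p) : Set (ZMod p × ZMod p) :=
  {q | q = (0, 1) ∨ q = (1, 0) ∨ (q.1 ≠ 0 ∧ q.2 = q.1) ∨ (q.1 ≠ 0 ∧ q.2 = q.1 * x)}

/-- For `p ≥ 5`, every orbit of size at least 2 of the permutation
`(c,d) ↦ (x·c, y·d)` of `ZMod p × ZMod p` contains at least one element of `𝓘⁽²⁾`
and at least one element of its complement `𝓘⁽¹⁾`. -/
theorem stmt13 (p : ℕ) (hp : p.Prime) (hodd : Odd p) (hp5 : 5 ≤ p) (x : ZMod p)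
    (hx : ∀ z : ZMod p, z ≠ 0 → ∃ k : ℕ, x ^ k = z) :
    ∀ u : ZMod p × ZMod p,
      2 ≤ (orbit (fun q : ZMod p × ZMod p => (x * q.1, x⁻¹ * q.2)) u).ncard →
        (∃ a ∈ orbit (fun q : ZMod p × ZMod p => (x * q.1, x⁻¹ * q.2)) u, a ∈ I2 p x) ∧
        (∃ a ∈ orbit (fun q : ZMod p × ZMod p => (x * q.1, x⁻¹ * q.2)) u, a ∉ I2 p x) := by
  haveI : Fact p.Prime := ⟨hp⟩
  have key : ∀ n : ℕ, 0 < n → n < p → (n : ZMod p) ≠ 0 := by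
    intro n hn hnp h
    rw [ZMod.natCast_eq_zero_iff] at h
    exact absurd (Nat.le_of_dvd hn h) (by omega)
  have h2 : (2 : ZMod p) ≠ 0 := by
    have := key 2 (by norm_num) (by omega); exact_mod_cast this
  have h3 : (3 : ZMod p) ≠ 0 := by
    have := key 3 (by norm_num) (by omega); exact_mod_cast this
  have h21 : (2 : ZMod p) ≠ 1 := by
    intro h
    have h1 := key 1 one_pos (by omega)
    apply h1; push_cast; linear_combination h
  have h41 : (4 : ZMod p) ≠ 1 := by
    intro h; apply h3; linear_combination h
  have hm1 : (-1 : ZMod p) ≠ 0 := neg_ne_zero.mpr one_ne_zero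
  have hm11 : (-1 : ZMod p) ≠ 1 := by
    intro h; apply h2; linear_combination -h
  have hx0 : x ≠ 0 := by
    intro h
    obtain ⟨k, hk⟩ := hx 2 h2
    rcases k with _ | k
    · rw [pow_zero] at hk; exact h21 hk.symm
    · rw [h, zero_pow (Nat.succ_ne_zero k)] at hk; exact h2 hk.symm
  -- x is not a square
  have hns : ∀ w : ZMod p, w ^ 2 ≠ x := by
    intro w hw
    have hw0 : w ≠ 0 := by rintro rfl; rw [← hw] at hx0; simp at hx0
    obtain ⟨k, hk⟩ := hx w hw0
    obtain ⟨m, hm⟩ := hx (-1) hm1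
    have hx1 : x ≠ 1 := by
      intro h; rw [h, one_pow] at hm; exact hm11 hm.symm
    have hk0 : k ≠ 0 := by
      rintro rfl; rw [pow_zero] at hk
      rw [← hk, one_pow] at hw; exact hx1 hw.symm
    have hx2k : x ^ (2 * k) = x := by
      rw [mul_comm, pow_mul, hk, hw]
    have hxx : x ^ (2 * k - 1) * x = 1 * x := by
      rw [one_mul, ← pow_succ]
      have : 2 * k - 1 + 1 = 2 * k := by omega
      rw [this, hx2k]
    have hxn : x ^ (2 * k - 1) = 1 := mul_right_cancel₀ hx0 hxx
    have hdvd : orderOf x ∣ 2 * k - 1 := orderOf_dvd_of_pow_eq_one hxn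
    have hdodd : Odd (orderOf x) := by
      rcases Nat.even_or_odd (orderOf x) with he | ho
      · exfalso
        have h2d : (2 : ℕ) ∣ orderOf x := he.two_dvd
        have : (2 : ℕ) ∣ 2 * k - 1 := h2d.trans hdvd
        omega
      · exact ho
    have hd2m : orderOf x ∣ 2 * m := by
      apply orderOf_dvd_of_pow_eq_one
      rw [mul_comm, pow_mul, hm, neg_one_sq]
    have hdm : orderOf x ∣ m :=
      (Nat.coprime_two_right.mpr hdodd).dvd_of_dvd_mul_left hd2m
    have : x ^ m = 1 := orderOf_dvd_iff_pow_eq_one.mp hdm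
    rw [hm] at this; exact hm11 this
  intro u hcard
  obtain ⟨c, d⟩ := u
  have hiter : ∀ k : ℕ,
      (fun q : ZMod p × ZMod p => (x * q.1, x⁻¹ * q.2))^[k] (c, d)
        = (x ^ k * c, (x ^ k)⁻¹ * d) := by
    intro k
    induction k with
    | zero => simp
    | succ n ih =>
      rw [Function.iterate_succ_apply', ih]
      simp only [pow_succ, mul_inv_rev, Prod.mk.injEq]
      constructor <;> ring
  rcases eq_or_ne c 0 with hc | hc
  · rcases eq_or_ne d 0 with hd | hd
    · -- fixed point, contradiction with size ≥ 2
      exfalso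
      subst hc; subst hd
      have hsub : orbit (fun q : ZMod p × ZMod p => (x * q.1, x⁻¹ * q.2))
          ((0 : ZMod p), (0 : ZMod p)) ⊆ {((0 : ZMod p), (0 : ZMod p))} := by
        rintro v ⟨k, hk⟩
        rw [hiter k] at hk
        simp only [mul_zero] at hk
        rw [← hk]; rfl
      have := Set.ncard_le_ncard hsub (Set.finite_singleton _)
      rw [Set.ncard_singleton] at this
      omega
    · -- c = 0, d ≠ 0
      subst hc
      constructor
      · obtain ⟨k, hk⟩ := hx d hd
        refine ⟨(0, 1), ⟨k, ?_⟩, Or.inl rfl⟩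
        rw [hiter k, hk]
        simp only [mul_zero, Prod.mk.injEq]
        exact ⟨trivial, inv_mul_cancel₀ hd⟩
      · obtain ⟨k, hk⟩ := hx (d * 2⁻¹) (mul_ne_zero hd (inv_ne_zero h2))
        refine ⟨(0, 2), ⟨k, ?_⟩, ?_⟩
        · rw [hiter k, hk]
          simp only [mul_zero, Prod.mk.injEq]
          refine ⟨trivial, ?_⟩
          field_simp
        · rintro (h | h | ⟨h1, _⟩ | ⟨h1, _⟩)
          · exact h21 (congrArg Prod.snd h)
          · exact one_ne_zero ((congrArg Prod.fst h).symm)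
          · exact h1 rfl
          · exact h1 rfl
  · rcases eq_or_ne d 0 with hd | hd
    · -- c ≠ 0, d = 0
      subst hd
      constructor
      · obtain ⟨k, hk⟩ := hx c⁻¹ (inv_ne_zero hc)
        refine ⟨(1, 0), ⟨k, ?_⟩, Or.inr (Or.inl rfl)⟩
        rw [hiter k, hk]
        simp only [mul_zero, Prod.mk.injEq]
        exact ⟨inv_mul_cancel₀ hc, trivial⟩
      · obtain ⟨k, hk⟩ := hx (2 * c⁻¹) (mul_ne_zero h2 (inv_ne_zero hc))
        refine ⟨(2, 0), ⟨k, ?_⟩, ?_⟩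
        · rw [hiter k, hk]
          simp only [mul_zero, Prod.mk.injEq]
          refine ⟨?_, trivial⟩
          field_simp
        · rintro (h | h | ⟨_, h1⟩ | ⟨_, h1⟩)
          · exact h2 (congrArg Prod.fst h)
          · exact h21 (congrArg Prod.fst h)
          · exact h2 h1.symm
          · exact (mul_ne_zero h2 hx0) h1.symm
    · -- c ≠ 0, d ≠ 0
      have hpt : ∀ z : ZMod p, z ≠ 0 →
          (z, c * d * z⁻¹) ∈ orbit (fun q : ZMod p × ZMod p => (x * q.1, x⁻¹ * q.2)) (c, d) := by
        intro z hz
        obtain ⟨k, hk⟩ := hx (z * c⁻¹) (mul_ne_zero hz (inv_ne_zero hc))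
        refine ⟨k, ?_⟩
        rw [hiter k, hk]
        simp only [Prod.mk.injEq]
        constructor <;> field_simp
      obtain ⟨m, hm⟩ := hx (c * d) (mul_ne_zero hc hd)
      have hzt : ∀ t : ℕ, x ^ t ≠ 0 := fun t => pow_ne_zero t hx0
      rcases Nat.even_or_odd m with ⟨t, ht⟩ | ⟨t, ht⟩
      · -- m = t + t : cd is a square
        have hcd : c * d = x ^ t * x ^ t := by rw [← hm, ht, pow_add]
        constructor
        · have h1 := hpt (x ^ t) (hzt t)
          have he : c * d * (x ^ t)⁻¹ = x ^ t := by
            rw [hcd]; field_simp; try ring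
          rw [he] at h1
          exact ⟨_, h1, Or.inr (Or.inr (Or.inl ⟨hzt t, rfl⟩))⟩
        · have hz' : (2 : ZMod p) * x ^ t ≠ 0 := mul_ne_zero h2 (hzt t)
          have h1 := hpt (2 * x ^ t) hz'
          have he : c * d * (2 * x ^ t)⁻¹ = x ^ t * 2⁻¹ := by
            rw [hcd]; field_simp; try ring
          rw [he] at h1
          refine ⟨_, h1, ?_⟩
          rintro (h | h | ⟨_, heq⟩ | ⟨_, heq⟩)
          · exact hz' (congrArg Prod.fst h)
          · exact (mul_ne_zero (hzt t) (inv_ne_zero h2)) (congrArg Prod.snd h)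
          · -- x^t * 2⁻¹ = 2 * x^t  ⇒ 4 = 1
            apply h41
            have h' : (4 : ZMod p) * x ^ t = 1 * x ^ t := by
              field_simp at heq
              linear_combination (-x ^ t) * heq
            exact mul_right_cancel₀ (hzt t) h'
          · -- x^t * 2⁻¹ = 2 * x^t * x ⇒ x = (2⁻¹)^2
            apply hns 2⁻¹
            have h2i : (2 : ZMod p) * 2⁻¹ = 1 := mul_inv_cancel₀ h2
            have h' : ((2 : ZMod p)⁻¹) ^ 2 * (2 * 2 * x ^ t) = x * (2 * 2 * x ^ t) := by
              field_simp at heq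
              calc ((2 : ZMod p)⁻¹) ^ 2 * (2 * 2 * x ^ t)
                  = (2 * 2⁻¹) * (2 * 2⁻¹) * x ^ t := by ring
                _ = x ^ t := by rw [h2i]; ring
                _ = x * (2 * 2 * x ^ t) := by linear_combination x ^ t * heq
            exact mul_right_cancel₀ (mul_ne_zero (mul_ne_zero h2 h2) (hzt t)) h'
      · -- m = 2t + 1
        have hcd : c * d = x ^ t * x ^ t * x := by
          rw [← hm, ht, pow_succ, two_mul, pow_add]
        constructor
        · have h1 := hpt (x ^ t) (hzt t)
          have he : c * d * (x ^ t)⁻¹ = x ^ t * x := by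
            rw [hcd]; field_simp; try ring
          rw [he] at h1
          exact ⟨_, h1, Or.inr (Or.inr (Or.inr ⟨hzt t, rfl⟩))⟩
        · have hz' : (2 : ZMod p) * x ^ t ≠ 0 := mul_ne_zero h2 (hzt t)
          have h1 := hpt (2 * x ^ t) hz'
          have he : c * d * (2 * x ^ t)⁻¹ = x ^ t * x * 2⁻¹ := by
            rw [hcd]; field_simp; try ring
          rw [he] at h1
          refine ⟨_, h1, ?_⟩
          rintro (h | h | ⟨_, heq⟩ | ⟨_, heq⟩)
          · exact hz' (congrArg Prod.fst h)
          · exact (mul_ne_zero (mul_ne_zero (hzt t) hx0) (inv_ne_zero h2))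
              (congrArg Prod.snd h)
          · -- x^t * x * 2⁻¹ = 2 * x^t ⇒ x = 4 = 2^2
            apply hns 2
            have h' : ((2 : ZMod p) ^ 2) * x ^ t = x * x ^ t := by
              field_simp at heq
              linear_combination (-x ^ t) * heq
            exact mul_right_cancel₀ (hzt t) h'
          · -- x^t * x * 2⁻¹ = 2 * x^t * x ⇒ 4 = 1
            apply h41
            have h' : (4 : ZMod p) * (x ^ t * x) = 1 * (x ^ t * x) := by
              field_simp at heq
              linear_combination (-(x ^ t * x)) * heq
            exact mul_right_cancel₀ (mul_ne_zero (hzt t) hx0) h'
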